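/- Let m ∈ [0,1], let T : [0,1] → [m,1] be monotone nonincreasing, and for i ∈ {1,2} let r_i : [0,1] → [0,1] be monotone nondecreasing, concave, and satisfy r_i(x) ≥ x for all x ∈ [0,1]. Define G(x,y) = r_2(y) if r_2(y) ≥ T(x), and G(x,y) = r_1(x) otherwise. Then the expectation of G(x,y) over (x,y) drawn uniformly from [0,1]^2 is at least (1+m)/2 - (1/2)·((1+m)/2)^2. -/

import Mathlib

open MeasureTheory Set

lemma integral_affine (a b c₁ c₂ : ℝ) (hab : a ≤ b) :
    ∫ y in Set.Ioo a b, (c₁ + c₂ * y) = c₁*(b-a) + c₂*(b^2-a^2)/2 := by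
  rw [← MeasureTheory.integral_Ioc_eq_integral_Ioo, ← intervalIntegral.integral_of_le hab]
  rw [intervalIntegral.integral_add intervalIntegrable_const
    ((intervalIntegral.intervalIntegrable_id).const_mul c₂)]
  rw [intervalIntegral.integral_const, intervalIntegral.integral_const_mul, integral_id]
  simp; ring

lemma chord_aux (r : ℝ → ℝ) (hconc : ConcaveOn ℝ (Set.Icc 0 1) r)
    (hr1 : r 1 = 1) (t a y : ℝ) (ht0 : 0 ≤ t) (ht1 : t ≤ 1)
    (ha0 : 0 ≤ a) (hay : a < y) (hy1 : y < 1)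
    (hS : ∀ u, a < u → u < 1 → t ≤ r u) :
    t * (1 - y) + (y - a) ≤ (1 - a) * r y := by
  have ha1 : a < 1 := hay.trans hy1
  apply le_of_forall_pos_le_add
  intro ε hε
  set δ : ℝ := min ((y - a)/2) (ε*(1-a)/2) with hδdef
  have hδ1 : δ ≤ (y - a)/2 := min_le_left _ _
  have hδ2 : δ ≤ ε*(1-a)/2 := min_le_right _ _
  have hδ0 : 0 < δ := lt_min (by linarith) (by nlinarith)
  set u : ℝ := a + δ with hudef
  have hau : a < u := by simp only [hudef]; linarith
  have huy : u < y := by simp only [hudef]; linarith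
  have hu1 : u < 1 := huy.trans hy1
  have hu0 : 0 ≤ u := by linarith
  have hru : t ≤ r u := hS u hau hu1
  have h1u : (0:ℝ) < 1 - u := by linarith
  set s : ℝ := (y - u)/(1 - u) with hsdef
  have hs0 : 0 ≤ s := div_nonneg (by linarith) h1u.le
  have hs1 : s ≤ 1 := by
    rw [hsdef, div_le_one h1u]; linarith
  have hseq : s * (1 - u) = y - u := by
    rw [hsdef]; field_simp
  have hyc : (1 - s) * u + s * 1 = y := by nlinarith [hseq]
  have hconc2 := hconc.2 (Set.mem_Icc.2 ⟨hu0, hu1.le⟩) (Set.mem_Icc.2 ⟨zero_le_one, le_refl (1:ℝ)⟩)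
      (show (0:ℝ) ≤ 1 - s by linarith) hs0 (by ring)
  rw [smul_eq_mul, smul_eq_mul, smul_eq_mul, smul_eq_mul, hyc, hr1] at hconc2
  have key : (1 - s) * t + s ≤ r y := by nlinarith
  have h1u' : 1 - u ≥ (1 - a)/2 := by
    simp only [hudef]; linarith
  have hsub : (t * (1 - y) + (y - a) - (1 - a)*((1-s)*t + s)) * (1 - u) = δ * (1-y) * (1-t) := by
    have e1 : s = (y - u)/(1-u) := hsdef
    have e2 : u = a + δ := hudef
    rw [e1]
    field_simp
    rw [e2]; ring
  have hbound : t * (1 - y) + (y - a) - (1 - a)*((1-s)*t + s) ≤ ε := by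
    have h2 : δ * (1-y) * (1-t) ≤ ε * (1 - u) := by
      have hy0 : (0:ℝ) < 1 - y := by linarith
      have ht0' : (0:ℝ) ≤ 1 - t := by linarith
      calc δ * (1-y) * (1-t) ≤ δ * 1 * 1 := by
            apply mul_le_mul
            · apply mul_le_mul le_rfl (by linarith) (by linarith) hδ0.le
            · linarith
            · linarith
            · positivity
        _ = δ := by ring
        _ ≤ ε * (1-a)/2 := hδ2
        _ ≤ ε * (1 - u) := by nlinarith
    have h3 : (t * (1 - y) + (y - a) - (1 - a)*((1-s)*t + s)) * (1-u) ≤ ε * (1-u) := by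
      rw [hsub]; exact h2
    exact le_of_mul_le_mul_right h3 h1u
  have h4 : (1-a) * ((1-s)*t + s) ≤ (1-a) * r y :=
    mul_le_mul_of_nonneg_left key (by linarith)
  linarith

lemma inner_bound (r₂ : ℝ → ℝ) (hr₂_mono : MonotoneOn r₂ (Set.Icc 0 1))
    (hr₂_conc : ConcaveOn ℝ (Set.Icc 0 1) r₂)
    (hr₂_ge : ∀ z ∈ Set.Icc (0:ℝ) 1, r₂ z ≥ z) (hr21 : r₂ 1 = 1)
    (x v t m : ℝ) (hx0 : 0 ≤ x) (hx1 : x ≤ 1) (hxv : x ≤ v)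
    (hm0 : 0 ≤ m) (htm : m ≤ t) (ht1 : t ≤ 1)
    (g : ℝ → ℝ) (hg : ∀ y, g y = if t ≤ r₂ y then r₂ y else v)
    (hint : IntegrableOn g (Set.Icc 0 1)) :
    min x ((1+m)/2) ≤ ∫ y in Set.Icc (0:ℝ) 1, g y := by
  have ht0 : 0 ≤ t := hm0.trans htm
  set S : Set ℝ := {y | y ∈ Set.Icc (0:ℝ) 1 ∧ t ≤ r₂ y} with hSdef
  have h1S : (1:ℝ) ∈ S := ⟨⟨zero_le_one, le_refl 1⟩, by rw [hr21]; exact ht1⟩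
  have hSne : S.Nonempty := ⟨1, h1S⟩
  have hSbdd : BddBelow S := ⟨0, fun y hy => hy.1.1⟩
  set a : ℝ := sInf S with hadef
  have ha0 : 0 ≤ a := le_csInf hSne (fun y hy => hy.1.1)
  have ha1 : a ≤ 1 := csInf_le hSbdd h1S
  have hat : a ≤ t := csInf_le hSbdd ⟨⟨ht0, ht1⟩, hr₂_ge t ⟨ht0, ht1⟩⟩
  have hup : ∀ y, a < y → y ≤ 1 → t ≤ r₂ y := by
    intro y hy hy1
    obtain ⟨w, hwS, hwy⟩ := exists_lt_of_csInf_lt hSne hy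
    exact hwS.2.trans (hr₂_mono hwS.1 ⟨hwS.1.1.trans hwy.le, hy1⟩ hwy.le)
  have hlow : ∀ y, 0 ≤ y → y < a → g y = v := by
    intro y hy0 hya
    rw [hg]
    rw [if_neg]
    intro hc
    exact absurd (csInf_le hSbdd ⟨⟨hy0, hya.le.trans ha1⟩, hc⟩) (not_le.2 hya)
  rw [MeasureTheory.integral_Icc_eq_integral_Ioo]
  rcases lt_or_ge a 1 with ha1' | ha1'
  · -- a < 1
    have split : Set.Ioc 0 a ∪ Set.Ioo a 1 = Set.Ioo (0:ℝ) 1 := by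
      ext y
      simp only [Set.mem_union, Set.mem_Ioc, Set.mem_Ioo]
      constructor
      · rintro (⟨h1, h2⟩ | ⟨h1, h2⟩)
        · exact ⟨h1, lt_of_le_of_lt h2 ha1'⟩
        · exact ⟨lt_of_le_of_lt ha0 h1, h2⟩
      · rintro ⟨h1, h2⟩
        rcases le_or_gt y a with h | h
        · exact Or.inl ⟨h1, h⟩
        · exact Or.inr ⟨h, h2⟩
    have hdisj : Disjoint (Set.Ioc 0 a) (Set.Ioo a 1) := by
      rw [Set.disjoint_left]
      rintro y ⟨_, h2⟩ ⟨h3, _⟩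
      exact absurd h3 (not_lt.2 h2)
    have hi1 : IntegrableOn g (Set.Ioc 0 a) :=
      hint.mono_set (fun y hy => ⟨hy.1.le, hy.2.trans ha1⟩)
    have hi2 : IntegrableOn g (Set.Ioo a 1) :=
      hint.mono_set (fun y hy => ⟨ha0.trans hy.1.le, hy.2.le⟩)
    rw [← split, MeasureTheory.setIntegral_union hdisj measurableSet_Ioo hi1 hi2]
    have p1 : x * a ≤ ∫ y in Set.Ioc 0 a, g y := by
      rw [MeasureTheory.integral_Ioc_eq_integral_Ioo]
      have hconst : ∫ _y in Set.Ioo (0:ℝ) a, x = x * a := by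
        rw [MeasureTheory.setIntegral_const]
        rw [Real.volume_real_Ioo_of_le (by linarith), smul_eq_mul]
        ring
      rw [← hconst]
      apply MeasureTheory.setIntegral_mono_on
      · exact integrableOn_const (by rw [Real.volume_Ioo]; exact ENNReal.ofReal_ne_top)
      · exact hint.mono_set (fun y hy => ⟨hy.1.le, hy.2.le.trans ha1⟩)
      · exact measurableSet_Ioo
      · intro y hy
        rw [hlow y hy.1.le hy.2]
        exact hxv
    have p2 : (t - a) + (1-t)*(1+a)/2 ≤ ∫ y in Set.Ioo a 1, g y := by
      have h1a : (0:ℝ) < 1 - a := by linarith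
      set c₁ : ℝ := (t-a)/(1-a) with hc₁
      set c₂ : ℝ := (1-t)/(1-a) with hc₂
      have hlin : ∫ y in Set.Ioo a 1, (c₁ + c₂ * y) = c₁*(1-a) + c₂*((1:ℝ)^2-a^2)/2 :=
        integral_affine a 1 c₁ c₂ ha1'.le
      rw [one_pow] at hlin
      have hval : c₁*(1-a) + c₂*(1-a^2)/2 = (t - a) + (1-t)*(1+a)/2 := by
        rw [hc₁, hc₂]
        field_simp
        ring
      rw [← hval, ← hlin]
      apply MeasureTheory.setIntegral_mono_on
      · exact ((continuous_const.add (continuous_const.mul continuous_id)).integrableOn_Icc).mono_set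
          Set.Ioo_subset_Icc_self
      · exact hi2
      · exact measurableSet_Ioo
      · intro y hy
        have hgy : g y = r₂ y := by
          rw [hg, if_pos (hup y hy.1 hy.2.le)]
        rw [hgy]
        have hch := chord_aux r₂ hr₂_conc hr21 t a y ht0 ht1 ha0 hy.1 hy.2
          (fun u h1 h2 => hup u h1 h2.le)
        have heq : c₁ + c₂ * y = (t*(1-y) + (y-a))/(1-a) := by
          rw [hc₁, hc₂]; field_simp; ring
        rw [heq, div_le_iff₀ h1a]
        linarith
    have harith : min x ((1+m)/2) ≤ x * a + ((t - a) + (1-t)*(1+a)/2) := by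
      have h1 : a * min x ((1+m)/2) ≤ a * x :=
        mul_le_mul_of_nonneg_left (min_le_left _ _) ha0
      have h2 : (1-a) * min x ((1+m)/2) ≤ (1-a) * ((1+t)/2) := by
        apply mul_le_mul_of_nonneg_left _ (by linarith)
        calc min x ((1+m)/2) ≤ (1+m)/2 := min_le_right _ _
          _ ≤ (1+t)/2 := by linarith
      nlinarith [h1, h2]
    linarith [p1, p2, harith]
  · -- a = 1 (a ≥ 1 and a ≤ 1)
    have haeq : a = 1 := le_antisymm ha1 ha1'
    have hconst : ∫ _y in Set.Ioo (0:ℝ) 1, x = x * 1 := by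
      rw [MeasureTheory.setIntegral_const]
      rw [Real.volume_real_Ioo_of_le (by norm_num)]
      norm_num
    calc min x ((1+m)/2) ≤ x := min_le_left _ _
      _ = ∫ _y in Set.Ioo (0:ℝ) 1, x := by rw [hconst]; ring
      _ ≤ ∫ y in Set.Ioo (0:ℝ) 1, g y := by
          apply MeasureTheory.setIntegral_mono_on
          · exact integrableOn_const (by rw [Real.volume_Ioo]; exact ENNReal.ofReal_ne_top)
          · exact hint.mono_set (fun y hy => ⟨hy.1.le, hy.2.le⟩)
          · exact measurableSet_Ioo
          · intro y hy
            rw [hlow y hy.1.le (haeq ▸ hy.2)]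
            exact hxv

/-- Sublemma "trr". -/
theorem trr (m : ℝ) (hm : m ∈ Set.Icc (0:ℝ) 1)
    (T : ℝ → ℝ) (hT_range : ∀ x ∈ Set.Icc (0:ℝ) 1, T x ∈ Set.Icc m 1)
    (hT_mono : AntitoneOn T (Set.Icc (0:ℝ) 1))
    (r₁ r₂ : ℝ → ℝ)
    (hr₁_mono : MonotoneOn r₁ (Set.Icc (0:ℝ) 1))
    (hr₂_mono : MonotoneOn r₂ (Set.Icc (0:ℝ) 1))
    (hr₁_conc : ConcaveOn ℝ (Set.Icc (0:ℝ) 1) r₁)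
    (hr₂_conc : ConcaveOn ℝ (Set.Icc (0:ℝ) 1) r₂)
    (hr₁_range : ∀ x ∈ Set.Icc (0:ℝ) 1, r₁ x ∈ Set.Icc (0:ℝ) 1)
    (hr₂_range : ∀ x ∈ Set.Icc (0:ℝ) 1, r₂ x ∈ Set.Icc (0:ℝ) 1)
    (hr₁_ge : ∀ x ∈ Set.Icc (0:ℝ) 1, r₁ x ≥ x)
    (hr₂_ge : ∀ x ∈ Set.Icc (0:ℝ) 1, r₂ x ≥ x)
    (G : ℝ → ℝ → ℝ)
    (hG : ∀ x y, G x y = if r₂ y ≥ T x then r₂ y else r₁ x) :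
    (∫ p in (Set.Icc (0:ℝ) 1) ×ˢ (Set.Icc (0:ℝ) 1), G p.1 p.2)
      ≥ (1 + m)/2 - 1/2 * ((1 + m)/2)^2 := by
  obtain ⟨hm0, hm1⟩ := hm
  set c : ℝ := (1+m)/2 with hc
  have hc0 : (0:ℝ) < c := by rw [hc]; linarith
  have hc1 : c ≤ 1 := by rw [hc]; linarith
  have hr21 : r₂ 1 = 1 :=
    le_antisymm (hr₂_range 1 ⟨zero_le_one, le_refl 1⟩).2 (hr₂_ge 1 ⟨zero_le_one, le_refl 1⟩)
  -- clamp
  set q : ℝ → ℝ := fun z => max 0 (min z 1) with hq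
  have hq_mono : Monotone q := monotone_const.max (monotone_id.min monotone_const)
  have hq_mem : ∀ z, q z ∈ Set.Icc (0:ℝ) 1 :=
    fun z => ⟨le_max_left _ _, max_le zero_le_one (min_le_right _ _)⟩
  have hq_id : ∀ z ∈ Set.Icc (0:ℝ) 1, q z = z := by
    rintro z ⟨h0, h1⟩
    simp only [hq]
    rw [min_eq_left h1, max_eq_right h0]
  set r₂' : ℝ → ℝ := fun z => r₂ (q z) with hr₂'
  set r₁' : ℝ → ℝ := fun z => r₁ (q z) with hr₁'
  set T' : ℝ → ℝ := fun z => T (q z) with hT'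
  have hr₂'m : Measurable r₂' :=
    Monotone.measurable (fun z w h => hr₂_mono (hq_mem z) (hq_mem w) (hq_mono h))
  have hr₁'m : Measurable r₁' :=
    Monotone.measurable (fun z w h => hr₁_mono (hq_mem z) (hq_mem w) (hq_mono h))
  have hT'm : Measurable T' :=
    Antitone.measurable (fun z w h => hT_mono (hq_mem z) (hq_mem w) (hq_mono h))
  set G' : ℝ × ℝ → ℝ := fun p => if T' p.1 ≤ r₂' p.2 then r₂' p.2 else r₁' p.1 with hG'
  have hG'meas : Measurable G' := by
    apply Measurable.ite
    · exact measurableSet_le (hT'm.comp measurable_fst) (hr₂'m.comp measurable_snd)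
    · exact hr₂'m.comp measurable_snd
    · exact hr₁'m.comp measurable_fst
  have hG'bdd : ∀ p : ℝ × ℝ, ‖G' p‖ ≤ 1 := by
    intro p
    rw [Real.norm_eq_abs, abs_le]
    simp only [hG']
    split
    · exact ⟨by linarith [(hr₂_range _ (hq_mem p.2)).1], (hr₂_range _ (hq_mem p.2)).2⟩
    · exact ⟨by linarith [(hr₁_range _ (hq_mem p.1)).1], (hr₁_range _ (hq_mem p.1)).2⟩
  set sq : Set (ℝ × ℝ) := (Set.Icc (0:ℝ) 1) ×ˢ (Set.Icc (0:ℝ) 1) with hsq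
  have hsqm : MeasurableSet sq := measurableSet_Icc.prod measurableSet_Icc
  have hsqvol : volume sq ≠ ⊤ := by
    rw [hsq, show (volume : Measure (ℝ×ℝ)) = (volume : Measure ℝ).prod volume from rfl,
      Measure.prod_prod]
    simp [Real.volume_Icc]
  have hEq : Set.EqOn G' (fun p : ℝ × ℝ => G p.1 p.2) sq := by
    rintro ⟨px, py⟩ ⟨hpx, hpy⟩
    simp only [hG', hG px py, ge_iff_le]
    rw [show r₂' py = r₂ py by simp only [hr₂']; rw [hq_id _ hpy],
      show T' px = T px by simp only [hT']; rw [hq_id _ hpx],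
      show r₁' px = r₁ px by simp only [hr₁']; rw [hq_id _ hpx]]
  have hG'int : IntegrableOn G' sq :=
    Measure.integrableOn_of_bounded hsqvol hG'meas.aestronglyMeasurable
      (Filter.Eventually.of_forall (fun p => hG'bdd p))
  have hGint : IntegrableOn (fun p : ℝ × ℝ => G p.1 p.2) sq :=
    hG'int.congr_fun hEq hsqm
  -- Fubini
  have hrestr : (volume : Measure (ℝ×ℝ)).restrict sq
      = ((volume : Measure ℝ).restrict (Set.Icc 0 1)).prod ((volume : Measure ℝ).restrict (Set.Icc 0 1)) := by
    rw [hsq, show (volume : Measure (ℝ×ℝ)) = (volume : Measure ℝ).prod volume from rfl,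
      ← Measure.prod_restrict]
  have hGint' : Integrable (fun p : ℝ × ℝ => G p.1 p.2)
      (((volume : Measure ℝ).restrict (Set.Icc 0 1)).prod ((volume : Measure ℝ).restrict (Set.Icc 0 1))) := by
    rw [← hrestr]; exact hGint
  have hfub : (∫ p in sq, G p.1 p.2)
      = ∫ x in Set.Icc (0:ℝ) 1, ∫ y in Set.Icc (0:ℝ) 1, G x y := by
    rw [show (∫ p in sq, G p.1 p.2) = ∫ p, G p.1 p.2 ∂((volume : Measure (ℝ×ℝ)).restrict sq) from rfl,
      hrestr, integral_prod _ hGint']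
  rw [hfub]
  -- per-x inner bound
  have hinner_int : ∀ x ∈ Set.Icc (0:ℝ) 1, IntegrableOn (fun y => G x y) (Set.Icc 0 1) := by
    intro x hx
    have hm' : Measurable (fun y => G' (x, y)) := hG'meas.comp measurable_prodMk_left
    have hvol : volume (Set.Icc (0:ℝ) 1) ≠ ⊤ := by
      rw [Real.volume_Icc]; exact ENNReal.ofReal_ne_top
    have hbint : IntegrableOn (fun y => G' (x, y)) (Set.Icc (0:ℝ) 1) :=
      Measure.integrableOn_of_bounded hvol hm'.aestronglyMeasurable
        (Filter.Eventually.of_forall (fun y => hG'bdd (x, y)))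
    exact hbint.congr_fun (fun y hy => hEq ⟨hx, hy⟩) measurableSet_Icc
  have houter : ∀ x ∈ Set.Icc (0:ℝ) 1, min x c ≤ ∫ y in Set.Icc (0:ℝ) 1, G x y := by
    intro x hx
    exact inner_bound r₂ hr₂_mono hr₂_conc hr₂_ge hr21 x (r₁ x) (T x) m hx.1 hx.2
      (hr₁_ge x hx) hm0 (hT_range x hx).1 (hT_range x hx).2 (G x)
      (fun y => hG x y) (hinner_int x hx)
  have houtint : IntegrableOn (fun x => ∫ y in Set.Icc (0:ℝ) 1, G x y) (Set.Icc (0:ℝ) 1) :=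
    hGint'.integral_prod_left
  have hminint : IntegrableOn (fun x => min x c) (Set.Icc (0:ℝ) 1) :=
    (continuous_id.min continuous_const).integrableOn_Icc
  have hmono : ∫ x in Set.Icc (0:ℝ) 1, min x c
      ≤ ∫ x in Set.Icc (0:ℝ) 1, ∫ y in Set.Icc (0:ℝ) 1, G x y :=
    setIntegral_mono_on hminint houtint measurableSet_Icc houter
  -- compute ∫ min
  have hval : ∫ x in Set.Icc (0:ℝ) 1, min x c = c - 1/2 * c^2 := by
    rw [MeasureTheory.integral_Icc_eq_integral_Ioo]
    have split2 : Set.Ioo 0 c ∪ Set.Ico c 1 = Set.Ioo (0:ℝ) 1 := by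
      ext y
      simp only [Set.mem_union, Set.mem_Ioo, Set.mem_Ico]
      constructor
      · rintro (⟨h1, h2⟩ | ⟨h1, h2⟩)
        · exact ⟨h1, lt_of_lt_of_le h2 hc1⟩
        · exact ⟨lt_of_lt_of_le hc0 h1, h2⟩
      · rintro ⟨h1, h2⟩
        rcases lt_or_ge y c with h | h
        · exact Or.inl ⟨h1, h⟩
        · exact Or.inr ⟨h, h2⟩
    have hdisj : Disjoint (Set.Ioo 0 c) (Set.Ico c 1) := by
      rw [Set.disjoint_left]
      rintro y ⟨_, h2⟩ ⟨h3, _⟩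
      exact absurd h3 (not_le.2 h2)
    have hi1 : IntegrableOn (fun x => min x c) (Set.Ioo 0 c) :=
      hminint.mono_set (fun y hy => ⟨hy.1.le, hy.2.le.trans hc1⟩)
    have hi2 : IntegrableOn (fun x => min x c) (Set.Ico c 1) :=
      hminint.mono_set (fun y hy => ⟨hc0.le.trans hy.1, hy.2.le⟩)
    rw [← split2, MeasureTheory.setIntegral_union hdisj measurableSet_Ico hi1 hi2]
    have e1 : ∫ x in Set.Ioo (0:ℝ) c, min x c = c^2/2 := by
      rw [setIntegral_congr_fun measurableSet_Ioo
        (fun x hx => min_eq_left hx.2.le : Set.EqOn (fun x => min x c) (fun x => x) (Set.Ioo 0 c))]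
      have := integral_affine 0 c 0 1 hc0.le
      simpa using this
    have e2 : ∫ x in Set.Ico c 1, min x c = (1-c)*c := by
      rw [setIntegral_congr_fun measurableSet_Ico
        (fun x hx => min_eq_right hx.1 : Set.EqOn (fun x => min x c) (fun _ => c) (Set.Ico c 1))]
      rw [MeasureTheory.setIntegral_const, Real.volume_real_Ico_of_le (by linarith), smul_eq_mul]
    rw [e1, e2]; ring
  rw [ge_iff_le, show (1+m)/2 - 1/2 * ((1+m)/2)^2 = c - 1/2 * c^2 from by rw [hc]]
  linarith [hmono, hval]
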